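/- Fix 0 ≤ j < k. For any real γ, the scaled score difference (1/N)(GAIC^γ_j(N) − GAIC^γ_k(N)) converges as N → ∞ to L := (1/(2σ²)) Σ_{i=j+1}^{k} ψ_σ(λ_i)² − γ(k − j), and moreover L ≥ ((k − j)/(2σ²)) · (ψ_σ(λ_k)² − 2γσ²). -/

import Mathlib

open Filter

/-- For `σ > 0`, `ψ_σ(x) = x + σ²/x`. -/
noncomputable def psi (σ x : ℝ) : ℝ := x + σ ^ 2 / x

/-- The score `GAIC^γ_j(N) = (N/(2σ²)) Σ_{i=j+1}^{q} ℓ_i(N)² + γ(Nj − j(j−1)/2)`. -/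
noncomputable def GAIC (σ : ℝ) (q : ℕ) (ℓ : ℕ → ℕ → ℝ) (γ : ℝ) (j N : ℕ) : ℝ :=
  ((N : ℝ) / (2 * σ ^ 2)) * ∑ i ∈ Finset.Icc (j + 1) q, (ℓ i N) ^ 2
    + γ * ((N : ℝ) * (j : ℝ) - (j : ℝ) * ((j : ℝ) - 1) / 2)

/-- For fixed `0 ≤ j < k` and any real `γ`, the scaled score difference
`(1/N)(GAIC^γ_j(N) − GAIC^γ_k(N))` converges to
`L = (1/(2σ²)) Σ_{i=j+1}^{k} ψ_σ(λ_i)² − γ(k − j)`,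
and `L ≥ ((k − j)/(2σ²))(ψ_σ(λ_k)² − 2γσ²)`. -/
theorem gaic_diff_tendsto_below
    (σ : ℝ) (hσ : 0 < σ) (q k : ℕ) (hq : 1 ≤ q) (hkq : k ≤ q)
    (lam : ℕ → ℝ)
    (hlam_anti : ∀ i j : ℕ, 1 ≤ i → i ≤ j → j ≤ k → lam j ≤ lam i)
    (hlam_gt : ∀ i : ℕ, 1 ≤ i → i ≤ k → σ < lam i)
    (ℓ : ℕ → ℕ → ℝ)
    (hℓ_anti : ∀ N i j : ℕ, 1 ≤ i → i ≤ j → j ≤ q → ℓ j N ≤ ℓ i N)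
    (hspike : ∀ i : ℕ, 1 ≤ i → i ≤ k →
      Tendsto (fun N : ℕ => ℓ i N) atTop (nhds (psi σ (lam i))))
    (hbulk : ∀ i : ℕ, k < i → i ≤ q →
      Tendsto (fun N : ℕ => ℓ i N) atTop (nhds (2 * σ)))
    (j : ℕ) (hjk : j < k) (γ : ℝ) :
    Tendsto (fun N : ℕ => (1 / (N : ℝ)) * (GAIC σ q ℓ γ j N - GAIC σ q ℓ γ k N)) atTop
      (nhds ((1 / (2 * σ ^ 2)) * ∑ i ∈ Finset.Icc (j + 1) k, (psi σ (lam i)) ^ 2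
        - γ * ((k : ℝ) - (j : ℝ)))) ∧
    (1 / (2 * σ ^ 2)) * ∑ i ∈ Finset.Icc (j + 1) k, (psi σ (lam i)) ^ 2
        - γ * ((k : ℝ) - (j : ℝ))
      ≥ (((k : ℝ) - (j : ℝ)) / (2 * σ ^ 2)) * ((psi σ (lam k)) ^ 2 - 2 * γ * σ ^ 2) := by

  have hσ2 : (2 * σ ^ 2) ≠ 0 := by positivity
  constructor
  · -- limit
    have hsum : Tendsto (fun N : ℕ => ∑ i ∈ Finset.Icc (j + 1) k, (ℓ i N) ^ 2) atTop
        (nhds (∑ i ∈ Finset.Icc (j + 1) k, (psi σ (lam i)) ^ 2)) := by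
      apply tendsto_finset_sum
      intro i hi
      simp only [Finset.mem_Icc] at hi
      exact ((hspike i (le_trans (Nat.succ_le_succ (Nat.zero_le j)) hi.1) hi.2).pow 2)
    set C : ℝ := γ * ((k : ℝ) * ((k : ℝ) - 1) - (j : ℝ) * ((j : ℝ) - 1)) / 2 with hC
    have hmain : Tendsto (fun N : ℕ =>
        (1 / (2 * σ ^ 2)) * ∑ i ∈ Finset.Icc (j + 1) k, (ℓ i N) ^ 2
          - γ * ((k : ℝ) - (j : ℝ)) + C * (1 / (N : ℝ))) atTop
        (nhds ((1 / (2 * σ ^ 2)) * ∑ i ∈ Finset.Icc (j + 1) k, (psi σ (lam i)) ^ 2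
          - γ * ((k : ℝ) - (j : ℝ)))) := by
      have h1 := ((hsum.const_mul (1 / (2 * σ ^ 2))).sub_const (γ * ((k : ℝ) - (j : ℝ)))).add
        ((tendsto_one_div_atTop_nhds_zero_nat).const_mul C)
      simpa using h1
    refine hmain.congr' ?_
    filter_upwards [eventually_ge_atTop 1] with N hN
    have hN0 : (N : ℝ) ≠ 0 := by positivity
    have hsplit : ∑ i ∈ Finset.Icc (j + 1) q, (ℓ i N) ^ 2
        = ∑ i ∈ Finset.Icc (j + 1) k, (ℓ i N) ^ 2 + ∑ i ∈ Finset.Icc (k + 1) q, (ℓ i N) ^ 2 := by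
      rw [Finset.Icc_add_one_left_eq_Ioc, Finset.Icc_add_one_left_eq_Ioc, Finset.Icc_add_one_left_eq_Ioc]
      exact (Finset.sum_Ioc_consecutive _ (le_of_lt hjk) hkq).symm
    simp only [GAIC, hsplit]
    field_simp
    ring
  · -- inequality
    have hψk : 0 < psi σ (lam k) := by
      have hk : σ < lam k := hlam_gt k (le_trans (Nat.one_le_iff_ne_zero.mpr (by omega)) le_rfl)
        le_rfl
      have : 0 < lam k := lt_trans hσ hk
      unfold psi; positivity
    have hbound : ∀ i ∈ Finset.Icc (j + 1) k, (psi σ (lam k)) ^ 2 ≤ (psi σ (lam i)) ^ 2 := by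
      intro i hi
      simp only [Finset.mem_Icc] at hi
      have hi1 : 1 ≤ i := le_trans (Nat.succ_le_succ (Nat.zero_le j)) hi.1
      have hle : lam k ≤ lam i := hlam_anti i k hi1 hi.2 le_rfl
      have hσi : σ < lam i := hlam_gt i hi1 hi.2
      have hσk : σ < lam k := hlam_gt k (le_trans hi1 hi.2) le_rfl
      have h0k : 0 < lam k := lt_trans hσ hσk
      have h0i : 0 < lam i := lt_trans hσ hσi
      have hψle : psi σ (lam k) ≤ psi σ (lam i) := by
        unfold psi
        rw [← sub_nonneg]
        have key : lam i + σ ^ 2 / lam i - (lam k + σ ^ 2 / lam k)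
            = (lam i - lam k) * (1 - σ ^ 2 / (lam k * lam i)) := by
          field_simp; ring
        rw [key]
        apply mul_nonneg (by linarith)
        rw [sub_nonneg, div_le_one (by positivity)]
        nlinarith
      nlinarith
    have hcard : ((Finset.Icc (j + 1) k).card : ℝ) = (k : ℝ) - (j : ℝ) := by
      rw [Nat.card_Icc]
      have : k + 1 - (j + 1) = k - j := by omega
      rw [this, Nat.cast_sub (le_of_lt hjk)]
    have hsum_ge : ((k : ℝ) - (j : ℝ)) * (psi σ (lam k)) ^ 2
        ≤ ∑ i ∈ Finset.Icc (j + 1) k, (psi σ (lam i)) ^ 2 := by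
      calc ((k : ℝ) - (j : ℝ)) * (psi σ (lam k)) ^ 2
          = ∑ _i ∈ Finset.Icc (j + 1) k, (psi σ (lam k)) ^ 2 := by
            rw [Finset.sum_const, nsmul_eq_mul, hcard]
        _ ≤ _ := Finset.sum_le_sum hbound
    have h2σ2 : (0:ℝ) < 2 * σ ^ 2 := by positivity
    have hr : (1 / (2 * σ ^ 2)) * ∑ i ∈ Finset.Icc (j + 1) k, (psi σ (lam i)) ^ 2
        - γ * ((k : ℝ) - (j : ℝ))
        = (∑ i ∈ Finset.Icc (j + 1) k, (psi σ (lam i)) ^ 2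
            - γ * ((k : ℝ) - (j : ℝ)) * (2 * σ ^ 2)) / (2 * σ ^ 2) := by
      field_simp
    rw [ge_iff_le, div_mul_eq_mul_div, hr, div_le_div_iff₀ h2σ2 h2σ2]
    nlinarith [hsum_ge, h2σ2]
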